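/- If 0 < h < 1/(s·c·c₃), then for every t ∈ ℝ, every Z ∈ ℝ^d and every family of drift stage values H⁽⁰⁾₁, …, H⁽⁰⁾_s with data (Z, t, h), one has max_{1≤i≤s} ‖H⁽⁰⁾_i‖ ≤ (‖Z‖ + s·c₃·c·h) / (1 − s·c₃·c·h). (Estimate (41) for the possibly implicitly defined drift stages of the SRK method.) -/
import Mathlib


/-- Estimate (41): bound on the (possibly implicitly defined) drift stages of the SRK method. -/
theorem stmt_13 (s d : ℕ) (hs : 0 < s) (hd : 0 < d) (c c₃ : ℝ) (hc : 0 < c) (hc₃ : 0 < c₃)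
    (a : ℝ → EuclideanSpace ℝ (Fin d) → EuclideanSpace ℝ (Fin d))
    (ha : ∀ t x, ‖a t x‖ ≤ c * (1 + ‖x‖))
    (A0 : Fin s → Fin s → ℝ) (hA0 : ∀ i j, |A0 i j| ≤ c₃)
    (c0 : Fin s → ℝ) (hc0 : ∀ j, |c0 j| ≤ c₃)
    (h : ℝ) (hh : 0 < h) (hh' : h < 1 / ((s : ℝ) * c * c₃))
    (t : ℝ) (Z : EuclideanSpace ℝ (Fin d))
    (H0 : Fin s → EuclideanSpace ℝ (Fin d))
    (hH0 : ∀ i, H0 i = Z + h • ∑ j, A0 i j • a (t + c0 j * h) (H0 j)) :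
    ∀ i, ‖H0 i‖ ≤ (‖Z‖ + (s : ℝ) * c₃ * c * h) / (1 - (s : ℝ) * c₃ * c * h) := by
  haveI : Nonempty (Fin s) := Fin.pos_iff_nonempty.mp hs
  have hne : (Finset.univ : Finset (Fin s)).Nonempty := Finset.univ_nonempty
  set M := Finset.univ.sup' hne (fun i => ‖H0 i‖) with hM
  have hsC : (0 : ℝ) < (s : ℝ) * c * c₃ := by positivity
  have hq : (s : ℝ) * c₃ * c * h < 1 := by
    have := (lt_div_iff₀ hsC).mp hh'
    nlinarith
  have hMle : ∀ i, ‖H0 i‖ ≤ M := fun i => Finset.le_sup' (fun i => ‖H0 i‖) (Finset.mem_univ i)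
  have hM0 : 0 ≤ M := le_trans (norm_nonneg _) (hMle hne.choose)
  have key : ∀ i, ‖H0 i‖ ≤ ‖Z‖ + (s : ℝ) * c₃ * c * h * (1 + M) := by
    intro i
    rw [hH0 i]
    calc ‖Z + h • ∑ j, A0 i j • a (t + c0 j * h) (H0 j)‖
        ≤ ‖Z‖ + ‖h • ∑ j, A0 i j • a (t + c0 j * h) (H0 j)‖ := norm_add_le _ _
      _ ≤ ‖Z‖ + (s : ℝ) * c₃ * c * h * (1 + M) := by
          gcongr ‖Z‖ + ?_
          rw [norm_smul, Real.norm_eq_abs, abs_of_pos hh]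
          have hsum : ‖∑ j, A0 i j • a (t + c0 j * h) (H0 j)‖ ≤ (s : ℝ) * (c₃ * (c * (1 + M))) := by
            calc ‖∑ j, A0 i j • a (t + c0 j * h) (H0 j)‖
                ≤ ∑ j, ‖A0 i j • a (t + c0 j * h) (H0 j)‖ := norm_sum_le _ _
              _ ≤ ∑ _j : Fin s, c₃ * (c * (1 + M)) := by
                  apply Finset.sum_le_sum
                  intro j _
                  rw [norm_smul, Real.norm_eq_abs]
                  have h1 : ‖a (t + c0 j * h) (H0 j)‖ ≤ c * (1 + M) := by
                    refine le_trans (ha _ _) ?_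
                    have := hMle j
                    nlinarith
                  have h2 : 0 ≤ ‖a (t + c0 j * h) (H0 j)‖ := norm_nonneg _
                  nlinarith [hA0 i j, abs_nonneg (A0 i j)]
              _ = (s : ℝ) * (c₃ * (c * (1 + M))) := by
                  rw [Finset.sum_const, Finset.card_univ, Fintype.card_fin, nsmul_eq_mul]
          nlinarith
  intro i
  have hMbd : M ≤ ‖Z‖ + (s : ℝ) * c₃ * c * h * (1 + M) := by
    obtain ⟨i0, _, hi0⟩ := Finset.exists_mem_eq_sup' hne (fun i => ‖H0 i‖)
    have hMe : M = ‖H0 i0‖ := hi0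
    linarith [key i0, hMe.ge, hMe.le]
  have h1q : 0 < 1 - (s : ℝ) * c₃ * c * h := by linarith
  rw [le_div_iff₀ h1q]
  have := hMle i
  nlinarith
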